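/- Averaging lemma for oscillatory sums: Let (γ_n) and (a_n) be positive sequences with γ_n → ∞ and Σ √γ_n / a_n = ∞, and suppose the sequence (γ_n/a_n) has bounded variation, i.e. Σ_n |γ_{n+1}/a_{n+1} − γ_n/a_n| < ∞. Let K ⊂ ℝ^d be compact, and (ξ_n) real functions on K with √γ_n·ξ_n → ψ uniformly on K, where ψ : K → ℝ satisfies c⁻¹ ≤ ψ ≤ c for some c > 0. Set Ξ_n = Σ_{j=0}^n ξ_j and Δ_n = Σ_{j=0}^n √γ_j/a_j. Then (1/Δ_n)·Σ_{k=0}^n (√γ_k/a_k)·cos(Ξ_k(x)) → 0 uniformly in x ∈ K. -/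

import Mathlib

open Finset Real Filter

lemma cos_lip_aux4 (x y : ℝ) : |Real.cos x - Real.cos y| ≤ |x - y| := by
  rw [Real.cos_sub_cos, abs_mul, abs_mul]
  have h1 : |(-2 : ℝ)| = 2 := by norm_num
  have h2 : |Real.sin ((x + y) / 2)| ≤ 1 := Real.abs_sin_le_one _
  have h3 : |Real.sin ((x - y) / 2)| ≤ |(x - y) / 2| := Real.abs_sin_le_abs
  have h4 : |(x - y) / 2| = |x - y| / 2 := by rw [abs_div]; norm_num
  rw [h1]
  nlinarith [abs_nonneg (Real.sin ((x - y) / 2)), abs_nonneg (x - y),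
    abs_nonneg (Real.sin ((x + y) / 2))]

lemma sin_step_aux4 (a h : ℝ) :
    |h * Real.cos (a + h) - (Real.sin (a + h) - Real.sin a)| ≤ h ^ 2 := by
  set b := a + h with hb
  have hderiv : ∀ x ∈ Set.uIcc a b,
      HasDerivWithinAt (fun t => Real.sin t - t * Real.cos b)
        (Real.cos x - Real.cos b) (Set.uIcc a b) x := by
    intro x _
    have : HasDerivAt (fun t => Real.sin t - t * Real.cos b)
        (Real.cos x - 1 * Real.cos b) x :=
      (Real.hasDerivAt_sin x).sub ((hasDerivAt_id x).mul_const _)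
    simpa using this.hasDerivWithinAt
  have hbound : ∀ x ∈ Set.uIcc a b, ‖Real.cos x - Real.cos b‖ ≤ |h| := by
    intro x hx
    rw [Real.norm_eq_abs]
    refine (cos_lip_aux4 x b).trans ?_
    have h2 : dist x b ≤ dist a b := Real.dist_le_of_mem_uIcc hx Set.right_mem_uIcc
    rw [Real.dist_eq, Real.dist_eq] at h2
    refine h2.trans (le_of_eq ?_)
    rw [hb, show a - (a + h) = -h by ring, abs_neg]
  have key := (convex_uIcc a b).norm_image_sub_le_of_norm_hasDerivWithin_le hderiv hbound
    Set.left_mem_uIcc Set.right_mem_uIcc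
  rw [Real.norm_eq_abs, Real.norm_eq_abs] at key
  have hba : b - a = h := by rw [hb]; ring
  rw [hba] at key
  calc |h * Real.cos (a + h) - (Real.sin (a + h) - Real.sin a)|
      = |Real.sin b - b * Real.cos b - (Real.sin a - a * Real.cos b)| := by
        rw [abs_sub_comm, ← hb]; ring_nf; rw [← hba]; ring_nf
    _ ≤ |h| * |h| := key
    _ = h ^ 2 := by rw [← abs_mul, ← sq, abs_sq]

lemma abel_bound_aux4 (r : ℕ → ℝ) (T : ℝ)
    (hsum : ∀ m, ∑ i ∈ range m, |r (i + 1) - r i| ≤ T)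
    (N : ℕ) (V : ℕ → ℝ) (hV : ∀ i, |V i| ≤ 1) (m : ℕ) :
    |∑ i ∈ range m, r (N + i) * (V (i + 1) - V i)| ≤ 2 * |r 0| + 4 * T := by
  have hT : 0 ≤ T := le_trans (by simp) (hsum 0)
  have hrbound : ∀ j, |r j| ≤ |r 0| + T := by
    intro j
    have h1 : ∑ i ∈ range j, (r (i + 1) - r i) = r j - r 0 := Finset.sum_range_sub r j
    have h2 : |r j - r 0| ≤ ∑ i ∈ range j, |r (i + 1) - r i| := by
      rw [← h1]; exact Finset.abs_sum_le_sum_abs _ _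
    have h3 := h2.trans (hsum j)
    calc |r j| = |r 0 + (r j - r 0)| := by ring_nf
      _ ≤ |r 0| + |r j - r 0| := abs_add_le _ _
      _ ≤ |r 0| + T := by linarith
  have hshift : ∀ m', ∑ i ∈ range m', |r (N + i + 1) - r (N + i)| ≤ T := by
    intro m'
    have he : ∑ i ∈ range m', |r (N + i + 1) - r (N + i)|
        = ∑ i ∈ Ico N (N + m'), |r (i + 1) - r i| := by
      rw [Finset.sum_Ico_eq_sum_range]; simp
    rw [he]
    calc ∑ i ∈ Ico N (N + m'), |r (i + 1) - r i|
        ≤ ∑ i ∈ range (N + m'), |r (i + 1) - r i| := by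
          apply Finset.sum_le_sum_of_subset_of_nonneg
          · rw [Finset.range_eq_Ico]; exact Finset.Ico_subset_Ico (Nat.zero_le _) le_rfl
          · intros; exact abs_nonneg _
      _ ≤ T := hsum _
  have habel := Finset.sum_range_by_parts (fun i => r (N + i)) (fun i => V (i + 1) - V i) m
  simp only [smul_eq_mul] at habel
  have hG : ∀ k, ∑ i ∈ range k, (V (i + 1) - V i) = V k - V 0 := fun k => Finset.sum_range_sub V k
  rw [habel]
  simp only [hG]
  have hVd : ∀ i j : ℕ, |V i - V j| ≤ 2 := by
    intro i j
    calc |V i - V j| ≤ |V i| + |V j| := abs_sub _ _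
      _ ≤ 1 + 1 := add_le_add (hV i) (hV j)
      _ = 2 := by norm_num
  calc |r (N + (m - 1)) * (V m - V 0) -
        ∑ i ∈ range (m - 1), (r (N + (i + 1)) - r (N + i)) * (V (i + 1) - V 0)|
      ≤ |r (N + (m - 1)) * (V m - V 0)| +
        |∑ i ∈ range (m - 1), (r (N + (i + 1)) - r (N + i)) * (V (i + 1) - V 0)| :=
        abs_sub _ _
    _ ≤ (|r 0| + T) * 2 + 2 * T := by
        gcongr ?_ + ?_
        · rw [abs_mul]
          exact mul_le_mul (hrbound _) (hVd _ _) (abs_nonneg _) (by positivity)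
        · calc |∑ i ∈ range (m - 1), (r (N + (i + 1)) - r (N + i)) * (V (i + 1) - V 0)|
              ≤ ∑ i ∈ range (m - 1), |(r (N + (i + 1)) - r (N + i)) * (V (i + 1) - V 0)| :=
                Finset.abs_sum_le_sum_abs _ _
            _ ≤ ∑ i ∈ range (m - 1), |r (N + i + 1) - r (N + i)| * 2 := by
                apply Finset.sum_le_sum
                intro i _
                rw [abs_mul, show N + (i + 1) = N + i + 1 by ring]
                exact mul_le_mul_of_nonneg_left (hVd _ _) (abs_nonneg _)
            _ = 2 * ∑ i ∈ range (m - 1), |r (N + i + 1) - r (N + i)| := by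
                rw [Finset.mul_sum]; apply Finset.sum_congr rfl; intros; ring
            _ ≤ 2 * T := by linarith [hshift (m - 1)]
    _ ≤ 2 * |r 0| + 4 * T := by linarith

lemma per_term_aux4 (γk ak e p A ε₁ ε₂ c : ℝ) (hγk : 0 < γk) (hak : 0 < ak) (hc : 0 < c)
    (hp1 : c⁻¹ ≤ p) (hp2 : p ≤ c) (hd : |p - Real.sqrt γk * e| ≤ ε₁) (hε₁1 : ε₁ ≤ 1)
    (hε₁0 : 0 ≤ ε₁) (hε₂pos : 0 < ε₂) (hs : (c + 1) / ε₂ ≤ Real.sqrt γk) :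
    |Real.sqrt γk / ak * Real.cos (A + e) -
        p⁻¹ * (γk / ak * (Real.sin (A + e) - Real.sin A))| ≤
      Real.sqrt γk / ak * (c * ε₁ + c * (c + 1) * ε₂) := by
  set s := Real.sqrt γk with hsdef
  have hs0 : 0 < s := Real.sqrt_pos.2 hγk
  have hss : s * s = γk := Real.mul_self_sqrt hγk.le
  have hp0 : 0 < p := lt_of_lt_of_le (inv_pos.2 hc) hp1
  have hpinv : p⁻¹ ≤ c := by
    have := inv_anti₀ (inv_pos.2 hc) hp1
    rwa [inv_inv] at this
  have hpinv0 : 0 ≤ p⁻¹ := (inv_pos.2 hp0).le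
  have hse : |s * e| ≤ c + 1 := by
    have h1 : |s * e| ≤ |p| + |p - s * e| := by
      have h0 : |s * e| = |p - (p - s * e)| := by ring_nf
      rw [h0]
      exact abs_sub _ _
    have h2 : |p| = p := abs_of_pos hp0
    linarith
  have he : |e| ≤ ε₂ := by
    have h1 : |e| * s = |s * e| := by
      rw [abs_mul, abs_of_pos hs0]; ring
    have h2 : c + 1 ≤ ε₂ * s := by
      have := mul_le_mul_of_nonneg_left hs hε₂pos.le
      rwa [mul_div_cancel₀ _ hε₂pos.ne'] at this
    have h3 : |e| * s ≤ ε₂ * s := by rw [h1]; linarith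
    exact le_of_mul_le_mul_right h3 hs0
  have hse2 : s * e ^ 2 ≤ (c + 1) * ε₂ := by
    have h1 : s * e ^ 2 = |s * e| * |e| := by
      rw [abs_mul, abs_of_pos hs0, mul_assoc, abs_mul_abs_self]; ring
    rw [h1]
    exact mul_le_mul hse he (abs_nonneg _) (by linarith)
  have hid : Real.sqrt γk / ak * Real.cos (A + e) -
      p⁻¹ * (γk / ak * (Real.sin (A + e) - Real.sin A)) =
      p⁻¹ * (s / ak * (p - s * e) * Real.cos (A + e) +
        γk / ak * (e * Real.cos (A + e) - (Real.sin (A + e) - Real.sin A))) := by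
    rw [← hsdef, ← hss]
    field_simp
    ring
  rw [hid, abs_mul]
  have hb0 : 0 ≤ s / ak := by positivity
  have hstep : |e * Real.cos (A + e) - (Real.sin (A + e) - Real.sin A)| ≤ e ^ 2 :=
    sin_step_aux4 A e
  calc |p⁻¹| * |s / ak * (p - s * e) * Real.cos (A + e) +
        γk / ak * (e * Real.cos (A + e) - (Real.sin (A + e) - Real.sin A))|
      ≤ c * (s / ak * ε₁ + s / ak * ((c + 1) * ε₂)) := by
        apply mul_le_mul
        · rwa [abs_of_nonneg hpinv0]
        · refine (abs_add_le _ _).trans ?_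
          apply add_le_add
          · rw [abs_mul, abs_mul, abs_of_nonneg hb0]
            calc s / ak * |p - s * e| * |Real.cos (A + e)|
                ≤ s / ak * ε₁ * 1 := by
                  apply mul_le_mul _ (Real.abs_cos_le_one _) (abs_nonneg _) (by positivity)
                  exact mul_le_mul_of_nonneg_left hd hb0
              _ = s / ak * ε₁ := by ring
          · rw [abs_mul]
            have hγa : |γk / ak| = s / ak * s := by
              rw [abs_of_pos (div_pos hγk hak), ← hss]; ring
            rw [hγa]
            calc s / ak * s * |e * Real.cos (A + e) - (Real.sin (A + e) - Real.sin A)|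
                ≤ s / ak * s * e ^ 2 := mul_le_mul_of_nonneg_left hstep (by positivity)
              _ = s / ak * (s * e ^ 2) := by ring
              _ ≤ s / ak * ((c + 1) * ε₂) := mul_le_mul_of_nonneg_left hse2 hb0
        · exact abs_nonneg _
        · exact hc.le
    _ = s / ak * (c * ε₁ + c * (c + 1) * ε₂) := by ring

/-- Averaging lemma for oscillatory sums (Lemma 1 of the paper). -/
theorem stmt_4 (d : ℕ) (K : Set (Fin d → ℝ)) (hK : IsCompact K)
    (γ a : ℕ → ℝ) (hγpos : ∀ n, 0 < γ n) (hapos : ∀ n, 0 < a n)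
    (hγ : Filter.Tendsto γ Filter.atTop Filter.atTop)
    (hdiv : Filter.Tendsto (fun n => ∑ j ∈ Finset.range (n + 1), Real.sqrt (γ j) / a j)
      Filter.atTop Filter.atTop)
    (hBV : Summable fun n => |γ (n + 1) / a (n + 1) - γ n / a n|)
    (ξ : ℕ → (Fin d → ℝ) → ℝ) (ψ : (Fin d → ℝ) → ℝ)
    (hunif : TendstoUniformlyOn (fun n x => Real.sqrt (γ n) * ξ n x) ψ Filter.atTop K)
    (c : ℝ) (hc : 0 < c) (hψ : ∀ x ∈ K, c⁻¹ ≤ ψ x ∧ ψ x ≤ c) :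
    TendstoUniformlyOn
      (fun n x =>
        (∑ k ∈ Finset.range (n + 1),
            Real.sqrt (γ k) / a k * Real.cos (∑ j ∈ Finset.range (k + 1), ξ j x)) /
          ∑ j ∈ Finset.range (n + 1), Real.sqrt (γ j) / a j)
      (fun _ => 0) Filter.atTop K := by
  have hb0 : ∀ k, 0 ≤ Real.sqrt (γ k) / a k := fun k => div_nonneg (Real.sqrt_nonneg _) (hapos k).le
  have key : ∀ ε : ℝ, 0 < ε → ∃ C : ℝ, 0 ≤ C ∧ ∀ n : ℕ, ∀ x ∈ K,
      |∑ k ∈ Finset.range (n + 1), Real.sqrt (γ k) / a k *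
          Real.cos (∑ j ∈ Finset.range (k + 1), ξ j x)| ≤
        C + ε * ∑ j ∈ Finset.range (n + 1), Real.sqrt (γ j) / a j := by
    intro ε hε
    have hc1 : (0 : ℝ) < c + 1 := by linarith
    set ε₁ := min 1 (ε / (2 * c)) with hε₁def
    set ε₂ := ε / (2 * c * (c + 1)) with hε₂def
    have hε₁pos : 0 < ε₁ := lt_min one_pos (by positivity)
    have hε₁1 : ε₁ ≤ 1 := min_le_left _ _
    have hε₂pos : 0 < ε₂ := by positivity
    have hεbar : c * ε₁ + c * (c + 1) * ε₂ ≤ ε := by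
      have h1 : c * ε₁ ≤ c * (ε / (2 * c)) := mul_le_mul_of_nonneg_left (min_le_right _ _) hc.le
      have h2 : c * (ε / (2 * c)) = ε / 2 := by field_simp
      have h3 : c * (c + 1) * ε₂ = ε / 2 := by rw [hε₂def]; field_simp
      linarith
    have hεbar0 : 0 ≤ c * ε₁ + c * (c + 1) * ε₂ := by positivity
    obtain ⟨N₁, hN₁⟩ := Filter.eventually_atTop.1
      (Metric.tendstoUniformlyOn_iff.1 hunif ε₁ hε₁pos)
    obtain ⟨N₂, hN₂⟩ := Filter.eventually_atTop.1
      (hγ.eventually_ge_atTop (((c + 1) / ε₂) ^ 2))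
    set N := max N₁ N₂ with hNdef
    set T := ∑' n, |γ (n + 1) / a (n + 1) - γ n / a n| with hTdef
    have hTpart : ∀ m, ∑ i ∈ Finset.range m, |γ (i + 1) / a (i + 1) - γ i / a i| ≤ T :=
      fun m => Summable.sum_le_tsum _ (fun i _ => abs_nonneg _) hBV
    have hT0 : 0 ≤ T := le_trans (by simp) (hTpart 0)
    have hhead0 : 0 ≤ ∑ k ∈ Finset.range N, Real.sqrt (γ k) / a k :=
      Finset.sum_nonneg fun k _ => hb0 k
    have hcR0 : 0 ≤ c * (2 * |γ 0 / a 0| + 4 * T) := by positivity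
    refine ⟨(∑ k ∈ Finset.range N, Real.sqrt (γ k) / a k) + c * (2 * |γ 0 / a 0| + 4 * T),
      by linarith, ?_⟩
    intro n x hx
    have hΔ0 : 0 ≤ ∑ j ∈ Finset.range (n + 1), Real.sqrt (γ j) / a j :=
      Finset.sum_nonneg fun j _ => hb0 j
    have habs_head : ∀ m, |∑ k ∈ Finset.range m, Real.sqrt (γ k) / a k *
        Real.cos (∑ j ∈ Finset.range (k + 1), ξ j x)| ≤
        ∑ k ∈ Finset.range m, Real.sqrt (γ k) / a k := by
      intro m
      refine (Finset.abs_sum_le_sum_abs _ _).trans (Finset.sum_le_sum fun k _ => ?_)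
      rw [abs_mul, abs_of_nonneg (hb0 k)]
      have h1 : |Real.cos (∑ j ∈ Finset.range (k + 1), ξ j x)| ≤ 1 := Real.abs_cos_le_one _
      nlinarith [hb0 k]
    rcases le_or_gt (n + 1) N with hn | hn
    · have h1 := habs_head (n + 1)
      have h2 : ∑ k ∈ Finset.range (n + 1), Real.sqrt (γ k) / a k ≤
          ∑ k ∈ Finset.range N, Real.sqrt (γ k) / a k :=
        Finset.sum_le_sum_of_subset_of_nonneg (Finset.range_subset_range.2 hn) (fun k _ _ => hb0 k)
      have h3 : 0 ≤ ε * ∑ j ∈ Finset.range (n + 1), Real.sqrt (γ j) / a j := by positivity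
      linarith
    · set M := n + 1 - N with hMdef
      have hNM : N + M = n + 1 := by omega
      have hsplit : ∀ f : ℕ → ℝ, ∑ k ∈ Finset.range (n + 1), f k =
          ∑ k ∈ Finset.range N, f k + ∑ i ∈ Finset.range M, f (N + i) := by
        intro f
        rw [← hNM, Finset.range_eq_Ico,
          ← Finset.sum_Ico_consecutive f (Nat.zero_le N) (Nat.le_add_right N M),
          ← Finset.range_eq_Ico, Finset.sum_Ico_eq_sum_range]
        simp
      have hp1 := (hψ x hx).1
      have hp2 := (hψ x hx).2
      have hp0 : 0 < ψ x := lt_of_lt_of_le (inv_pos.2 hc) hp1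
      have hterm : ∀ i, i < M →
          |Real.sqrt (γ (N + i)) / a (N + i) *
              Real.cos (∑ j ∈ Finset.range (N + i + 1), ξ j x) -
            (ψ x)⁻¹ * (γ (N + i) / a (N + i) *
              (Real.sin (∑ j ∈ Finset.range (N + i + 1), ξ j x) -
               Real.sin (∑ j ∈ Finset.range (N + i), ξ j x)))| ≤
          Real.sqrt (γ (N + i)) / a (N + i) * (c * ε₁ + c * (c + 1) * ε₂) := by
        intro i _
        have hk1 : N₁ ≤ N + i := le_trans (le_max_left _ _) (Nat.le_add_right N i)
        have hk2 : N₂ ≤ N + i := le_trans (le_max_right _ _) (Nat.le_add_right N i)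
        have hd' : |ψ x - Real.sqrt (γ (N + i)) * ξ (N + i) x| ≤ ε₁ := by
          have h := hN₁ (N + i) hk1 x hx
          rw [Real.dist_eq] at h
          exact h.le
        have hsq : (c + 1) / ε₂ ≤ Real.sqrt (γ (N + i)) := by
          have h1 := hN₂ (N + i) hk2
          have h2 : (0 : ℝ) ≤ (c + 1) / ε₂ := by positivity
          exact (Real.le_sqrt h2 (hγpos (N + i)).le).2 h1
        have hA : ∑ j ∈ Finset.range (N + i + 1), ξ j x =
            (∑ j ∈ Finset.range (N + i), ξ j x) + ξ (N + i) x := Finset.sum_range_succ _ _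
        rw [hA]
        exact per_term_aux4 (γ (N + i)) (a (N + i)) (ξ (N + i) x) (ψ x)
          (∑ j ∈ Finset.range (N + i), ξ j x) ε₁ ε₂ c
          (hγpos (N + i)) (hapos (N + i)) hc hp1 hp2 hd' hε₁1 hε₁pos.le hε₂pos hsq
      set V : ℕ → ℝ := fun i => Real.sin (∑ j ∈ Finset.range (N + i), ξ j x) with hVdef
      have hV : ∀ i, |V i| ≤ 1 := fun i => Real.abs_sin_le_one _
      have habel := abel_bound_aux4 (fun k => γ k / a k) T hTpart N V hV M
      have hVsucc : ∀ i : ℕ, V (i + 1) = Real.sin (∑ j ∈ Finset.range (N + i + 1), ξ j x) := by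
        intro i
        simp only [hVdef]
        rw [show N + (i + 1) = N + i + 1 by omega]
      have htail : |∑ i ∈ Finset.range M, Real.sqrt (γ (N + i)) / a (N + i) *
          Real.cos (∑ j ∈ Finset.range (N + i + 1), ξ j x)| ≤
          (∑ i ∈ Finset.range M, Real.sqrt (γ (N + i)) / a (N + i)) *
            (c * ε₁ + c * (c + 1) * ε₂) + c * (2 * |γ 0 / a 0| + 4 * T) := by
        have hdecomp : ∑ i ∈ Finset.range M, Real.sqrt (γ (N + i)) / a (N + i) *
            Real.cos (∑ j ∈ Finset.range (N + i + 1), ξ j x) =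
            (∑ i ∈ Finset.range M, (Real.sqrt (γ (N + i)) / a (N + i) *
              Real.cos (∑ j ∈ Finset.range (N + i + 1), ξ j x) -
              (ψ x)⁻¹ * (γ (N + i) / a (N + i) * (V (i + 1) - V i)))) +
            (ψ x)⁻¹ * ∑ i ∈ Finset.range M, γ (N + i) / a (N + i) * (V (i + 1) - V i) := by
          rw [Finset.mul_sum, ← Finset.sum_add_distrib]
          apply Finset.sum_congr rfl
          intro i _
          ring
        rw [hdecomp]
        refine (abs_add_le _ _).trans ?_
        apply add_le_add
        · refine (Finset.abs_sum_le_sum_abs _ _).trans ?_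
          rw [Finset.sum_mul]
          apply Finset.sum_le_sum
          intro i hi
          have h := hterm i (Finset.mem_range.1 hi)
          rw [hVsucc i]
          simpa only [hVdef] using h
        · rw [abs_mul]
          refine mul_le_mul ?_ habel (abs_nonneg _) hc.le
          rw [abs_of_nonneg (inv_pos.2 hp0).le]
          have := inv_anti₀ (inv_pos.2 hc) hp1
          rwa [inv_inv] at this
      rw [hsplit]
      refine (abs_add_le _ _).trans ?_
      have h1 := habs_head N
      have hΔeq := hsplit (fun j => Real.sqrt (γ j) / a j)
      have hsum_le : ∑ i ∈ Finset.range M, Real.sqrt (γ (N + i)) / a (N + i) ≤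
          ∑ j ∈ Finset.range (n + 1), Real.sqrt (γ j) / a j := by
        rw [hΔeq]; linarith
      have htail0 : 0 ≤ ∑ i ∈ Finset.range M, Real.sqrt (γ (N + i)) / a (N + i) :=
        Finset.sum_nonneg fun i _ => hb0 (N + i)
      have h2 : (∑ i ∈ Finset.range M, Real.sqrt (γ (N + i)) / a (N + i)) *
          (c * ε₁ + c * (c + 1) * ε₂) ≤
          ε * ∑ j ∈ Finset.range (n + 1), Real.sqrt (γ j) / a j := by
        calc (∑ i ∈ Finset.range M, Real.sqrt (γ (N + i)) / a (N + i)) *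
            (c * ε₁ + c * (c + 1) * ε₂)
            ≤ (∑ j ∈ Finset.range (n + 1), Real.sqrt (γ j) / a j) * ε :=
              mul_le_mul hsum_le hεbar hεbar0 hΔ0
          _ = ε * ∑ j ∈ Finset.range (n + 1), Real.sqrt (γ j) / a j := by ring
      linarith
  rw [Metric.tendstoUniformlyOn_iff]
  intro ε hε
  obtain ⟨C, hC0, hC⟩ := key (ε / 2) (by positivity)
  have hev := hdiv.eventually_ge_atTop (2 * C / ε + 1)
  filter_upwards [hev] with n hn x hx
  have hΔpos : 0 < ∑ j ∈ Finset.range (n + 1), Real.sqrt (γ j) / a j :=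
    lt_of_lt_of_le (by positivity) hn
  have hS := hC n x hx
  have hCΔ : C < ε / 2 * ∑ j ∈ Finset.range (n + 1), Real.sqrt (γ j) / a j := by
    have h1 : ε / 2 * (2 * C / ε + 1) = C + ε / 2 := by field_simp
    nlinarith
  rw [Real.dist_eq]
  have habs : |0 - (∑ k ∈ Finset.range (n + 1), Real.sqrt (γ k) / a k *
      Real.cos (∑ j ∈ Finset.range (k + 1), ξ j x)) /
      ∑ j ∈ Finset.range (n + 1), Real.sqrt (γ j) / a j| =
      |∑ k ∈ Finset.range (n + 1), Real.sqrt (γ k) / a k *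
        Real.cos (∑ j ∈ Finset.range (k + 1), ξ j x)| /
      (∑ j ∈ Finset.range (n + 1), Real.sqrt (γ j) / a j) := by
    rw [zero_sub, abs_neg, abs_div, abs_of_pos hΔpos]
  rw [habs, div_lt_iff₀ hΔpos]
  calc |∑ k ∈ Finset.range (n + 1), Real.sqrt (γ k) / a k *
      Real.cos (∑ j ∈ Finset.range (k + 1), ξ j x)|
      ≤ C + ε / 2 * ∑ j ∈ Finset.range (n + 1), Real.sqrt (γ j) / a j := hS
    _ < ε * ∑ j ∈ Finset.range (n + 1), Real.sqrt (γ j) / a j := by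
        have : 0 < ε / 2 * ∑ j ∈ Finset.range (n + 1), Real.sqrt (γ j) / a j := by positivity
        nlinarith
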